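/- Let n > 3 be an integer and b̃ > 1. Then T̃ₙ(2, b̃) is invertible, all entries of T̃ₙ(2, b̃)⁻¹ are positive, and ‖T̃ₙ(2, b̃)⁻¹‖∞ ≤ (n+1)²/8 − n(b̃−2)/(2(b̃−1)). -/

import Mathlib

open Matrix BigOperators Finset

/-- The symmetric tridiagonal near-Toeplitz matrix with corner diagonal entries `bt`,
interior diagonal entries `b`, and off-diagonal entries `-1` (0-based indices). -/
noncomputable def Ttilde (n : ℕ) (b bt : ℝ) : Matrix (Fin n) (Fin n) ℝ :=
  Matrix.of fun i j =>
    if (i : ℕ) = (j : ℕ) then (if (i : ℕ) = 0 ∨ (i : ℕ) = n - 1 then bt else b)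
    else if (i : ℕ) + 1 = (j : ℕ) ∨ (j : ℕ) + 1 = (i : ℕ) then (-1 : ℝ) else 0

/-- The maximum absolute row sum (operator norm induced by the sup norm). -/
noncomputable def normInf {n : ℕ} (A : Matrix (Fin n) (Fin n) ℝ) : ℝ :=
  ⨆ i : Fin n, ∑ j : Fin n, |A i j|


lemma tri_apply_sum (n : ℕ) (b bt : ℝ) (x : ℕ → ℝ) (i : Fin n) :
    ∑ j : Fin n, Ttilde n b bt i j * x (j : ℕ) =
      (if (i : ℕ) = 0 ∨ (i : ℕ) = n - 1 then bt else b) * x (i : ℕ)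
        - (if (i : ℕ) + 1 < n then x ((i : ℕ) + 1) else 0)
        - (if 0 < (i : ℕ) then x ((i : ℕ) - 1) else 0) := by
  have hsplit : ∀ j : Fin n, Ttilde n b bt i j * x (j : ℕ) =
      (if (j : ℕ) = (i : ℕ) then
        (if (i : ℕ) = 0 ∨ (i : ℕ) = n - 1 then bt else b) * x (j : ℕ) else 0)
      + ((if (j : ℕ) = (i : ℕ) + 1 then -x (j : ℕ) else 0)
      + (if (j : ℕ) + 1 = (i : ℕ) then -x (j : ℕ) else 0)) := by
    intro j
    simp only [Ttilde, Matrix.of_apply]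
    split_ifs <;> first | omega | ring1
  rw [Finset.sum_congr rfl fun j _ => hsplit j, Finset.sum_add_distrib,
    Finset.sum_add_distrib]
  have h1 : (∑ j : Fin n, if (j : ℕ) = (i : ℕ) then
      (if (i : ℕ) = 0 ∨ (i : ℕ) = n - 1 then bt else b) * x (j : ℕ) else 0)
      = (if (i : ℕ) = 0 ∨ (i : ℕ) = n - 1 then bt else b) * x (i : ℕ) := by
    rw [Finset.sum_eq_single i]
    · rw [if_pos rfl]
    · intro j _ hj
      exact if_neg fun h => hj (Fin.ext h)
    · simp
  have h2 : (∑ j : Fin n, if (j : ℕ) = (i : ℕ) + 1 then -x (j : ℕ) else 0)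
      = -(if (i : ℕ) + 1 < n then x ((i : ℕ) + 1) else 0) := by
    by_cases h : (i : ℕ) + 1 < n
    · rw [if_pos h, Finset.sum_eq_single (⟨(i : ℕ) + 1, h⟩ : Fin n)]
      · rw [if_pos rfl]
      · intro j _ hj
        exact if_neg fun hj' => hj (Fin.ext hj')
      · simp
    · rw [if_neg h, neg_zero, Finset.sum_eq_zero]
      intro j _
      apply if_neg
      intro hj
      have := j.isLt
      omega
  have h3 : (∑ j : Fin n, if (j : ℕ) + 1 = (i : ℕ) then -x (j : ℕ) else 0)
      = -(if 0 < (i : ℕ) then x ((i : ℕ) - 1) else 0) := by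
    by_cases h : 0 < (i : ℕ)
    · rw [if_pos h, Finset.sum_eq_single (⟨(i : ℕ) - 1, by omega⟩ : Fin n)]
      · rw [if_pos (by simp; omega)]
      · intro j _ hj
        exact if_neg fun hj' => hj (Fin.ext (by simp; omega))
      · simp
    · rw [if_neg h, neg_zero, Finset.sum_eq_zero]
      intro j _
      apply if_neg
      intro hj
      omega
  rw [h1, h2, h3]
  ring

noncomputable def Mf (n : ℕ) (c : ℝ) (i j : ℕ) : ℝ :=
  (c * ((min i j : ℕ) : ℝ) + 1) * (c * ((n - 1 - max i j : ℕ) : ℝ) + 1) /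
    (c * (c * ((n - 1 : ℕ) : ℝ) + 2))


lemma TM_eq_one (n : ℕ) (hn : 3 < n) (bt : ℝ) (hbt : 1 < bt) :
    Ttilde n 2 bt * Matrix.of (fun i j : Fin n => Mf n (bt - 1) (i : ℕ) (j : ℕ)) = 1 := by
  obtain ⟨c, hc0, rfl⟩ : ∃ c, 0 < c ∧ bt = c + 1 := ⟨bt - 1, by linarith, by ring⟩
  simp only [add_sub_cancel_right]
  have hcne : c ≠ 0 := ne_of_gt hc0
  have hnR : (4 : ℝ) ≤ (n : ℝ) := by exact_mod_cast hn
  have hden : c * ((n : ℝ) - 1) + 2 ≠ 0 := by nlinarith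
  have e1 : ((n - 1 : ℕ) : ℝ) = (n : ℝ) - 1 := by
    rw [Nat.cast_sub (by omega)]; norm_num
  have e2 : ((n - 2 : ℕ) : ℝ) = (n : ℝ) - 2 := by rw [Nat.cast_sub (by omega)]; norm_num
  ext i k
  rw [Matrix.mul_apply]
  simp only [Matrix.of_apply]
  rw [show (∑ j : Fin n, Ttilde n 2 (c + 1) i j * Mf n c (j : ℕ) (k : ℕ))
      = (if (i : ℕ) = 0 ∨ (i : ℕ) = n - 1 then c + 1 else 2) * Mf n c (i : ℕ) (k : ℕ)
        - (if (i : ℕ) + 1 < n then Mf n c ((i : ℕ) + 1) (k : ℕ) else 0)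
        - (if 0 < (i : ℕ) then Mf n c ((i : ℕ) - 1) (k : ℕ) else 0)
      from tri_apply_sum n 2 (c + 1) (fun m => Mf n c m (k : ℕ)) i]
  rw [Matrix.one_apply]
  rcases i with ⟨i, hi⟩
  rcases k with ⟨k, hk⟩
  simp only [Fin.mk.injEq]
  by_cases hi0 : i = 0
  · subst hi0
    rw [if_pos (Or.inl rfl), if_pos (by omega), if_neg (by omega), sub_zero]
    by_cases hk0 : k = 0
    · subst hk0
      rw [if_pos rfl]
      simp only [Mf]
      rw [show min 0 0 = 0 from rfl, show max 0 0 = 0 from rfl,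
          show min 1 0 = 0 from by omega, show max 1 0 = 1 from by omega,
          show n - 1 - 0 = n - 1 from by omega, show n - 1 - 1 = n - 2 from by omega,
          e1, e2]
      push_cast
      field_simp
      ring
    · rw [if_neg (by omega)]
      simp only [Mf]
      rw [show min 0 k = 0 from by omega, show max 0 k = k from by omega,
          show min 1 k = 1 from by omega, show max 1 k = k from by omega, e1]
      push_cast
      field_simp
      ring
  · by_cases hin : i = n - 1
    · subst hin
      rw [if_pos (Or.inr rfl), if_neg (by omega), if_pos (by omega), sub_zero,
          show n - 1 - 1 = n - 2 from by omega]
      by_cases hkn : n - 1 = k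
      · rw [if_pos hkn]
        subst hkn
        simp only [Mf]
        rw [show min (n-1) (n-1) = n - 1 from by omega, show max (n-1) (n-1) = n - 1 from by omega,
            show min (n-2) (n-1) = n - 2 from by omega, show max (n-2) (n-1) = n - 1 from by omega,
            show n - 1 - (n - 1) = 0 from by omega, e1, e2]
        push_cast
        field_simp
        ring
      · rw [if_neg hkn]
        have hkn2 : k ≤ n - 2 := by omega
        simp only [Mf]
        rw [show min (n-1) k = k from by omega, show max (n-1) k = n - 1 from by omega,
            show min (n-2) k = k from by omega, show max (n-2) k = n - 2 from by omega,
            show n - 1 - (n - 1) = 0 from by omega, show n - 1 - (n - 2) = 1 from by omega,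
            e1]
        push_cast
        field_simp
        ring
    · -- interior row
      rw [if_neg (by omega), if_pos (by omega), if_pos (by omega)]
      obtain ⟨r, rfl⟩ : ∃ r, i = r + 1 := ⟨i - 1, by omega⟩
      rw [show r + 1 - 1 = r from by omega]
      obtain ⟨s, hs⟩ : ∃ s, n = r + s + 3 := ⟨n - r - 3, by omega⟩
      have hns : (n : ℝ) = (r : ℝ) + (s : ℝ) + 3 := by rw [hs]; push_cast; ring
      rcases lt_trichotomy k (r + 1) with hlt | heq | hgt
      · -- k < i
        rw [if_neg (by omega)]
        simp only [Mf]
        rw [show min (r+1) k = k from by omega, show max (r+1) k = r + 1 from by omega,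
            show min (r+1+1) k = k from by omega, show max (r+1+1) k = r + 2 from by omega,
            show min r k = k from by omega]
        rw [show n - 1 - (r+1) = s + 1 from by omega, show n - 1 - (r+2) = s from by omega,
            show n - 1 - max r k = s + 2 from by omega, e1]
        push_cast
        field_simp
        ring
      · -- k = i
        rw [if_pos heq.symm]
        subst heq
        simp only [Mf]
        rw [show min (r+1) (r+1) = r + 1 from by omega, show max (r+1) (r+1) = r + 1 from by omega,
            show min (r+1+1) (r+1) = r + 1 from by omega, show max (r+1+1) (r+1) = r + 2 from by omega,
            show min r (r+1) = r from by omega, show max r (r+1) = r + 1 from by omega]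
        rw [show n - 1 - (r+1) = s + 1 from by omega, show n - 1 - (r+2) = s from by omega, e1]
        push_cast
        field_simp
        rw [hns]
        ring
      · -- k > i
        rw [if_neg (by omega)]
        simp only [Mf]
        rw [show min (r+1) k = r + 1 from by omega, show max (r+1) k = k from by omega,
            show min (r+1+1) k = r + 2 from by omega, show max (r+1+1) k = k from by omega,
            show min r k = r from by omega, show max r k = k from by omega, e1]
        push_cast
        field_simp
        ring

lemma T_mulVec_row (n : ℕ) (hn : 3 < n) (c : ℝ) (hc0 : 0 < c) (i : Fin n) :
    ∑ j : Fin n, Ttilde n 2 (c + 1) i j *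
      (((j : ℕ) : ℝ) * ((n : ℝ) - 1 - ((j : ℕ) : ℝ)) / 2 + (n : ℝ) / (2 * c)) = 1 := by
  have hcne : c ≠ 0 := ne_of_gt hc0
  have e1 : ((n - 1 : ℕ) : ℝ) = (n : ℝ) - 1 := by rw [Nat.cast_sub (by omega)]; norm_num
  have e2 : ((n - 2 : ℕ) : ℝ) = (n : ℝ) - 2 := by rw [Nat.cast_sub (by omega)]; norm_num
  rw [tri_apply_sum n 2 (c + 1)
    (fun m => ((m : ℕ) : ℝ) * ((n : ℝ) - 1 - ((m : ℕ) : ℝ)) / 2 + (n : ℝ) / (2 * c)) i]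
  rcases i with ⟨i, hi⟩
  simp only []
  by_cases hi0 : i = 0
  · subst hi0
    rw [if_pos (Or.inl rfl), if_pos (by omega), if_neg (by omega), sub_zero]
    push_cast
    field_simp
    ring
  · by_cases hin : i = n - 1
    · subst hin
      rw [if_pos (Or.inr rfl), if_neg (by omega), if_pos (by omega),
          show n - 1 - 1 = n - 2 from by omega, e1, e2]
      field_simp
      ring
    · rw [if_neg (by omega), if_pos (by omega), if_pos (by omega)]
      obtain ⟨r, rfl⟩ : ∃ r, i = r + 1 := ⟨i - 1, by omega⟩
      rw [show r + 1 - 1 = r from by omega]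
      push_cast
      field_simp
      ring


theorem stmt8 (n : ℕ) (hn : 3 < n) (bt : ℝ) (hbt : 1 < bt) :
    IsUnit (Ttilde n 2 bt) ∧
    (∀ i j : Fin n, 0 < (Ttilde n 2 bt)⁻¹ i j) ∧
    normInf ((Ttilde n 2 bt)⁻¹) ≤
      ((n : ℝ) + 1) ^ 2 / 8 - (n : ℝ) * (bt - 2) / (2 * (bt - 1)) := by
  obtain ⟨c, hc0, rfl⟩ : ∃ c, 0 < c ∧ bt = c + 1 := ⟨bt - 1, by linarith, by ring⟩
  have hcne : c ≠ 0 := ne_of_gt hc0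
  have hTM := TM_eq_one n hn (c + 1) hbt
  rw [show c + 1 - 1 = c from by ring] at hTM
  set Mmat := Matrix.of (fun i j : Fin n => Mf n c (i : ℕ) (j : ℕ)) with hM
  have hMT : Mmat * Ttilde n 2 (c + 1) = 1 := mul_eq_one_comm.mp hTM
  have hUnit : IsUnit (Ttilde n 2 (c + 1)) := ⟨⟨_, Mmat, hTM, hMT⟩, rfl⟩
  have hInv : (Ttilde n 2 (c + 1))⁻¹ = Mmat := Matrix.inv_eq_right_inv hTM
  have hpos : ∀ i j : Fin n, 0 < Mmat i j := by
    intro i j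
    simp only [hM, Matrix.of_apply, Mf]
    have a1 : (0:ℝ) ≤ ((min (i : ℕ) (j : ℕ) : ℕ) : ℝ) := Nat.cast_nonneg _
    have a2 : (0:ℝ) ≤ ((n - 1 - max (i : ℕ) (j : ℕ) : ℕ) : ℝ) := Nat.cast_nonneg _
    have a3 : (0:ℝ) ≤ ((n - 1 : ℕ) : ℝ) := Nat.cast_nonneg _
    exact div_pos (mul_pos (by nlinarith) (by nlinarith)) (mul_pos hc0 (by nlinarith))
  refine ⟨hUnit, fun i j => by rw [hInv]; exact hpos i j, ?_⟩
  -- row sums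
  set xv : Fin n → ℝ :=
    fun i => ((i : ℕ) : ℝ) * ((n : ℝ) - 1 - ((i : ℕ) : ℝ)) / 2 + (n : ℝ) / (2 * c) with hxv
  have hx : Ttilde n 2 (c + 1) *ᵥ xv = fun _ => 1 := by
    funext i
    simpa [Matrix.mulVec, dotProduct, hxv] using T_mulVec_row n hn c hc0 i
  have hrow : ∀ i : Fin n, ∑ j : Fin n, Mmat i j = xv i := by
    intro i
    have h1 : Mmat *ᵥ (Ttilde n 2 (c + 1) *ᵥ xv) = xv := by
      rw [Matrix.mulVec_mulVec, hMT, Matrix.one_mulVec]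
    rw [hx] at h1
    have h2 := congrFun h1 i
    simpa [Matrix.mulVec, dotProduct] using h2
  rw [hInv]
  simp only [normInf]
  haveI : Nonempty (Fin n) := ⟨⟨0, by omega⟩⟩
  apply ciSup_le
  intro i
  have habs : ∑ j : Fin n, |Mmat i j| = xv i := by
    rw [Finset.sum_congr rfl fun j _ => abs_of_pos (hpos i j), hrow i]
  rw [habs, hxv]
  have hfr : (n : ℝ) * (c + 1 - 2) / (2 * (c + 1 - 1)) = (n : ℝ) / 2 - (n : ℝ) / (2 * c) := by
    rw [show c + 1 - 1 = c from by ring]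
    field_simp
    ring
  rw [hfr]
  nlinarith [sq_nonneg ((n : ℝ) - 1 - 2 * ((i : ℕ) : ℝ))]
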